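/- Let q be a power of a prime p and let F be a field of characteristic p containing 𝔽_q, complete with respect to a nonarchimedean absolute value |·|. Let d ≥ 1 and let Δ₁ ∈ M_d(F) with ‖Δ₁‖ < 1. Then there exists a sequence Φ : ℕ → M_d(F) with Φ₀ = Id, satisfying Φ_n = Φ_n^{[q]} + Δ₁·Φ_{n−1}^{[q]} for all n ≥ 1, and with ‖Φ_n‖ ≤ ‖Δ₁‖^{(qⁿ−1)/(q−1)} for all n ≥ 0; in particular ‖Φ_n‖ → 0 as n → ∞. -/

import Mathlib

/-- The supremum norm of a matrix: the maximum of the norms of its entries. -/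
noncomputable def matNorm {ι κ : Type*} [Fintype ι] [Fintype κ] {F : Type*} [Norm F]
    (M : Matrix ι κ F) : ℝ :=
  ⨆ i, ⨆ j, ‖M i j‖

section Aux

variable {F : Type*} [NormedField F] [IsUltrametricDist F] [CompleteSpace F]

lemma aux_summable {q : ℕ} (hq : 2 ≤ q) {a : F} (ha : ‖a‖ < 1) :
    Summable (fun m : ℕ => a ^ q ^ m) := by
  refine Summable.of_norm (Summable.of_nonneg_of_le (fun m => norm_nonneg _) (fun m => ?_)
    (summable_geometric_of_lt_one (norm_nonneg a) ha))
  rw [norm_pow]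
  exact pow_le_pow_of_le_one (norm_nonneg a) ha.le (Nat.lt_pow_self (by omega) : m < q ^ m).le

lemma aux_norm_tsum_le {q : ℕ} (hq : 2 ≤ q) {a : F} (ha : ‖a‖ < 1) :
    ‖∑' m : ℕ, a ^ q ^ m‖ ≤ ‖a‖ := by
  refine IsUltrametricDist.norm_tsum_le_of_forall_le_of_nonneg (norm_nonneg a) (fun m => ?_)
  rw [norm_pow]
  calc ‖a‖ ^ q ^ m ≤ ‖a‖ ^ 1 :=
        pow_le_pow_of_le_one (norm_nonneg a) ha.le (Nat.one_le_pow _ _ (by omega))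
    _ = ‖a‖ := pow_one _

lemma aux_funceq {p n q : ℕ} [Fact p.Prime] [CharP F p] (hq : q = p ^ n) (hq2 : 2 ≤ q)
    {a : F} (ha : ‖a‖ < 1) :
    (∑' m : ℕ, a ^ q ^ m) = a + (∑' m : ℕ, a ^ q ^ m) ^ q := by
  have hs := aux_summable hq2 ha
  let frq : F →+ F := AddMonoidHom.mk' (fun x => x ^ q)
    (fun x y => by subst hq; exact add_pow_char_pow x y p n)
  have hcont : Continuous ⇑frq := continuous_pow q
  have hmap : HasSum (fun m : ℕ => (a ^ q ^ m) ^ q) ((∑' m : ℕ, a ^ q ^ m) ^ q) :=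
    (hs.hasSum).map frq hcont
  have h2 : (∑' m : ℕ, a ^ q ^ m) ^ q = ∑' m : ℕ, a ^ q ^ (m + 1) := by
    rw [← hmap.tsum_eq]
    congr 1
    funext m
    rw [← pow_mul, ← pow_succ]
  conv_lhs => rw [hs.tsum_eq_zero_add]
  rw [h2, pow_zero, pow_one]

end Aux

/-- Let `q = pⁿ` and let `F ⊇ 𝔽_q` be a field of characteristic `p`, complete
with respect to a nonarchimedean absolute value.  Let `Δ₁ ∈ M_d(F)` with `‖Δ₁‖ < 1`.  Then
there is a sequence `Φ : ℕ → M_d(F)` with `Φ₀ = Id`, satisfying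
`Φ_k = Φ_k^{[q]} + Δ₁ Φ_{k-1}^{[q]}` for all `k ≥ 1`, and with
`‖Φ_k‖ ≤ ‖Δ₁‖^{(q^k-1)/(q-1)}` for all `k`; in particular `‖Φ_k‖ → 0`. -/
theorem statement15
    (p n q : ℕ) [Fact p.Prime] (hn : n ≠ 0) (hq : q = p ^ n)
    (F : Type) [NormedField F] [IsUltrametricDist F] [CompleteSpace F] [CharP F p]
    (φ : GaloisField p n →+* F)
    (d : ℕ) (hd : 1 ≤ d)
    (Δ₁ : Matrix (Fin d) (Fin d) F) (hΔ : matNorm Δ₁ < 1) :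
    ∃ Φ : ℕ → Matrix (Fin d) (Fin d) F, Φ 0 = 1 ∧
      (∀ k : ℕ, Φ (k + 1) = (Φ (k + 1)).map (· ^ q) + Δ₁ * (Φ k).map (· ^ q)) ∧
      (∀ k : ℕ, matNorm (Φ k) ≤ (matNorm Δ₁) ^ ((((q : ℝ) ^ k) - 1) / ((q : ℝ) - 1))) ∧
      Filter.Tendsto (fun k => matNorm (Φ k)) Filter.atTop (nhds 0) := by
  haveI : Nonempty (Fin d) := ⟨⟨0, hd⟩⟩
  have hp2 : 2 ≤ p := (Fact.out : p.Prime).two_le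
  have hq2 : 2 ≤ q := by
    subst hq
    exact le_trans hp2 (Nat.le_self_pow hn p)
  have hqR : (1 : ℝ) < (q : ℝ) := by
    have : (2 : ℝ) ≤ (q : ℝ) := by exact_mod_cast hq2
    linarith
  -- basic matNorm facts
  have entry_le : ∀ (M : Matrix (Fin d) (Fin d) F) i j, ‖M i j‖ ≤ matNorm M := by
    intro M i j
    have h1 : ‖M i j‖ ≤ ⨆ j', ‖M i j'‖ :=
      le_ciSup (Set.Finite.bddAbove (Set.finite_range fun j' => ‖M i j'‖)) j
    have h2 : (⨆ j', ‖M i j'‖) ≤ matNorm M :=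
      le_ciSup (Set.Finite.bddAbove (Set.finite_range fun i' => ⨆ j', ‖M i' j'‖)) i
    exact h1.trans h2
  have matNorm_le : ∀ (M : Matrix (Fin d) (Fin d) F) (t : ℝ),
      (∀ i j, ‖M i j‖ ≤ t) → matNorm M ≤ t := by
    intro M t h
    exact ciSup_le fun i => ciSup_le fun j => h i j
  set r : ℝ := matNorm Δ₁ with hr
  have hr0 : 0 ≤ r := le_trans (norm_nonneg _) (entry_le Δ₁ ⟨0, hd⟩ ⟨0, hd⟩)
  -- the exponents
  set c : ℕ → ℝ := fun k => (((q : ℝ) ^ k) - 1) / ((q : ℝ) - 1) with hc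
  have hc0 : c 0 = 0 := by simp [hc]
  have hcnonneg : ∀ k, 0 ≤ c k := by
    intro k
    apply div_nonneg _ (by linarith)
    have : (1 : ℝ) ≤ (q : ℝ) ^ k := one_le_pow₀ hqR.le
    linarith
  have hcsucc : ∀ k, c (k + 1) = 1 + c k * q := by
    intro k
    have hq1 : (q : ℝ) - 1 ≠ 0 := by linarith
    simp only [hc]
    field_simp
    ring
  -- the recursive sequence
  set Φ : ℕ → Matrix (Fin d) (Fin d) F := fun k =>
    Nat.rec (1 : Matrix (Fin d) (Fin d) F)
      (fun _ P => Matrix.of fun i j => ∑' m : ℕ, ((Δ₁ * P.map (· ^ q)) i j) ^ q ^ m) k with hΦ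
  have hΦ0 : Φ 0 = 1 := rfl
  have hΦsucc : ∀ k i j,
      Φ (k + 1) i j = ∑' m : ℕ, ((Δ₁ * (Φ k).map (· ^ q)) i j) ^ q ^ m := fun k i j => rfl
  -- entrywise norm bound, by induction
  have hbound : ∀ k i j, ‖Φ k i j‖ ≤ r ^ c k := by
    intro k
    induction k with
    | zero =>
      intro i j
      rw [hc0, Real.rpow_zero, hΦ0]
      by_cases h : i = j <;> simp [Matrix.one_apply, h]
    | succ k ih =>
      have hA : ∀ i j, ‖(Δ₁ * (Φ k).map (· ^ q)) i j‖ ≤ r ^ c (k + 1) := by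
        intro i j
        have hck1 : 0 ≤ c k * q := mul_nonneg (hcnonneg k) (by positivity)
        rw [Matrix.mul_apply]
        refine IsUltrametricDist.norm_sum_le_of_forall_le_of_nonneg
          (Real.rpow_nonneg hr0 _) (fun l _ => ?_)
        rw [norm_mul, Matrix.map_apply, norm_pow]
        calc ‖Δ₁ i l‖ * ‖Φ k l j‖ ^ q ≤ r * (r ^ c k) ^ q := by
              apply mul_le_mul (entry_le Δ₁ i l)
                (pow_le_pow_left₀ (norm_nonneg _) (ih l j) q)
                (by positivity) hr0
          _ = r ^ c (k + 1) := by
              rw [hcsucc k, ← Real.rpow_natCast (r ^ c k) q, ← Real.rpow_mul hr0,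
                Real.rpow_add_of_nonneg hr0 zero_le_one hck1, Real.rpow_one]
      have hAlt : ∀ i j, ‖(Δ₁ * (Φ k).map (· ^ q)) i j‖ < 1 := by
        intro i j
        refine lt_of_le_of_lt (hA i j) (Real.rpow_lt_one hr0 hΔ ?_)
        rw [hcsucc k]
        have := mul_nonneg (hcnonneg k) (show (0:ℝ) ≤ q by positivity)
        linarith
      intro i j
      rw [hΦsucc k i j]
      exact le_trans (aux_norm_tsum_le hq2 (hAlt i j)) (hA i j)
  -- the functional equation
  have hAlt : ∀ k i j, ‖(Δ₁ * (Φ k).map (· ^ q)) i j‖ < 1 := by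
    intro k i j
    have h1 := hbound (k + 1) i j
    -- redo the bound on A directly
    have hck1 : 0 ≤ c k * q := mul_nonneg (hcnonneg k) (by positivity)
    have hA : ‖(Δ₁ * (Φ k).map (· ^ q)) i j‖ ≤ r ^ c (k + 1) := by
      rw [Matrix.mul_apply]
      refine IsUltrametricDist.norm_sum_le_of_forall_le_of_nonneg
        (Real.rpow_nonneg hr0 _) (fun l _ => ?_)
      rw [norm_mul, Matrix.map_apply, norm_pow]
      calc ‖Δ₁ i l‖ * ‖Φ k l j‖ ^ q ≤ r * (r ^ c k) ^ q := by
            apply mul_le_mul (entry_le Δ₁ i l)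
              (pow_le_pow_left₀ (norm_nonneg _) (hbound k l j) q)
              (by positivity) hr0
        _ = r ^ c (k + 1) := by
            rw [hcsucc k, ← Real.rpow_natCast (r ^ c k) q, ← Real.rpow_mul hr0,
              Real.rpow_add_of_nonneg hr0 zero_le_one hck1, Real.rpow_one]
    refine lt_of_le_of_lt hA (Real.rpow_lt_one hr0 hΔ ?_)
    rw [hcsucc k]
    have := mul_nonneg (hcnonneg k) (show (0:ℝ) ≤ q by positivity)
    linarith
  refine ⟨Φ, hΦ0, ?_, ?_, ?_⟩
  · intro k
    ext i j
    have hT := aux_funceq (F := F) hq hq2 (hAlt k i j)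
    rw [← hΦsucc k i j] at hT
    rw [Matrix.add_apply, Matrix.map_apply]
    conv_lhs => rw [hT]
    ring
  · intro k
    exact matNorm_le _ _ (hbound k)
  · -- tendsto 0
    have hck : ∀ k : ℕ, (k : ℝ) ≤ c k := by
      intro k
      rw [hc, le_div_iff₀ (by linarith)]
      have := one_add_mul_le_pow (a := (q : ℝ) - 1) (by linarith) k
      have h2 : (1 : ℝ) + ((q : ℝ) - 1) = q := by ring
      rw [h2] at this
      linarith
    refine squeeze_zero (fun k => le_trans (norm_nonneg _) (entry_le (Φ k) ⟨0, hd⟩ ⟨0, hd⟩))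
      (fun k => le_trans (matNorm_le _ _ (hbound k))
        (Real.rpow_le_rpow_of_exponent_ge' hr0 hΔ.le (Nat.cast_nonneg k) (hck k))) ?_
    have : ∀ k : ℕ, r ^ ((k : ℕ) : ℝ) = r ^ (k : ℕ) := fun k => Real.rpow_natCast r k
    simp only [this]
    exact tendsto_pow_atTop_nhds_zero_of_lt_one hr0 hΔ
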